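/- Let M = {E_m}_{m∈𝒳} be a quantum instrument on a finite-dimensional Hilbert space Q and s = {p(x), ρ_x}_{x∈X} an input ensemble. Then the entropy defect loss of the channelized instrument equals Δχ(s, M) = Σ_m p(m) [χ(s) − χ(s̄_m)] − I(X:𝒳), where I(X:𝒳) is the classical mutual information between input letter and outcome and s̄_m is the conditional output ensemble given outcome m. -/

import Mathlib

open Matrix
open scoped BigOperators ComplexOrder Classical

noncomputable section

namespace QID

variable {Q Q' R A X O B : Type*}

/-- The rank-one projector `|ψ⟩⟨ψ|`. -/
def pureState (ψ : Q → ℂ) : Matrix Q Q ℂ :=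
  Matrix.vecMulVec ψ (star ψ)

/-- A density matrix: positive semidefinite with unit trace. -/
def IsDensity [Fintype Q] (ρ : Matrix Q Q ℂ) : Prop :=
  ρ.PosSemidef ∧ ρ.trace = 1

/-- Square root of a positive semidefinite matrix (junk value `0` otherwise). -/
def sqrtPSD [Fintype Q] [DecidableEq Q] (M : Matrix Q Q ℂ) : Matrix Q Q ℂ :=
  if h : M.PosSemidef then h.1.eigenvectorUnitary.1 *
    Matrix.diagonal ((↑) ∘ Real.sqrt ∘ h.1.eigenvalues) *
    (star h.1.eigenvectorUnitary : Matrix Q Q ℂ) else 0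

/-- The trace norm `‖M‖₁ = Tr √(MᴴM)`. -/
def traceNorm [Fintype Q] [DecidableEq Q] (M : Matrix Q Q ℂ) : ℝ :=
  (sqrtPSD (Mᴴ * M)).trace.re

/-- The fidelity `F(ρ,σ) = (Tr|√ρ√σ|)²`. -/
def fidelity [Fintype Q] [DecidableEq Q] (ρ σ : Matrix Q Q ℂ) : ℝ :=
  (traceNorm (sqrtPSD ρ * sqrtPSD σ)) ^ 2

/-- The von Neumann entropy `S(ρ) = -Tr[ρ log₂ ρ]` (base two), computed through
the eigenvalues of `ρ`; junk value `0` if `ρ` is not Hermitian. -/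
def entropy [Fintype Q] [DecidableEq Q] (ρ : Matrix Q Q ℂ) : ℝ :=
  if h : ρ.IsHermitian then (∑ i, Real.negMulLog (h.eigenvalues i)) / Real.log 2 else 0

/-- The entropy defect (Holevo quantity) `χ(s) = S(ρ_s) - ∑ₓ p(x) S(ρₓ)` of an ensemble. -/
def entropyDefect [Fintype Q] [DecidableEq Q] [Fintype X]
    (p : X → ℝ) (ρ : X → Matrix Q Q ℂ) : ℝ :=
  entropy (∑ x, (p x : ℂ) • ρ x) - ∑ x, p x * entropy (ρ x)

/-- The action of `id_R ⊗ Φ` on a bipartite matrix. -/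
def idTensor (Φ : Matrix Q Q ℂ →ₗ[ℂ] Matrix Q' Q' ℂ)
    (M : Matrix (R × Q) (R × Q) ℂ) : Matrix (R × Q') (R × Q') ℂ :=
  fun p q => Φ (Matrix.of fun a b => M (p.1, a) (q.1, b)) p.2 q.2

/-- Complete positivity: every ampliation `id_{Fin k} ⊗ Φ` preserves positive semidefiniteness. -/
def IsCompletelyPositive [Fintype Q] [Fintype Q']
    (Φ : Matrix Q Q ℂ →ₗ[ℂ] Matrix Q' Q' ℂ) : Prop :=
  ∀ (k : ℕ) (M : Matrix (Fin k × Q) (Fin k × Q) ℂ),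
    M.PosSemidef → (idTensor Φ M).PosSemidef

def IsTracePreserving [Fintype Q] [Fintype Q']
    (Φ : Matrix Q Q ℂ →ₗ[ℂ] Matrix Q' Q' ℂ) : Prop :=
  ∀ M : Matrix Q Q ℂ, (Φ M).trace = M.trace

/-- A channel: a completely positive trace-preserving linear map. -/
def IsChannel [Fintype Q] [Fintype Q']
    (Φ : Matrix Q Q ℂ →ₗ[ℂ] Matrix Q' Q' ℂ) : Prop :=
  IsCompletelyPositive Φ ∧ IsTracePreserving Φ

/-- A quantum instrument: a family of completely positive maps summing up to a
trace-preserving map. -/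
def IsInstrument [Fintype Q] [Fintype Q'] [Fintype O]
    (E : O → (Matrix Q Q ℂ →ₗ[ℂ] Matrix Q' Q' ℂ)) : Prop :=
  (∀ m, IsCompletelyPositive (E m)) ∧
    ∀ M : Matrix Q Q ℂ, (∑ m, E m M).trace = M.trace

/-- Partial trace over the first tensor factor. -/
def ptraceL [Fintype R] (M : Matrix (R × Q) (R × Q) ℂ) : Matrix Q Q ℂ :=
  fun a b => ∑ i, M (i, a) (i, b)

/-- Partial trace over the second tensor factor. -/
def ptraceRt [Fintype Q] (M : Matrix (R × Q) (R × Q) ℂ) : Matrix R R ℂ :=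
  fun i j => ∑ a, M (i, a) (j, a)

/-- `Ψ` (a vector on `R × Q`, reference first) purifies the state `ρ` on `Q`. -/
def IsPurification [Fintype R] (ρ : Matrix Q Q ℂ) (Ψ : R × Q → ℂ) : Prop :=
  ptraceL (pureState Ψ) = ρ

/-- The channelized instrument `ρ ↦ ∑ₘ Eₘ(ρ) ⊗ |m⟩⟨m|`, acting `Q → Q' ⊗ 𝒳`. -/
def instrApply [DecidableEq O] (E : O → (Matrix Q Q ℂ →ₗ[ℂ] Matrix Q' Q' ℂ))
    (ρ : Matrix Q Q ℂ) : Matrix (Q' × O) (Q' × O) ℂ :=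
  fun p q => if p.2 = q.2 then E p.2 ρ p.1 q.1 else 0

/-- The action of `id_R ⊗ M` for the channelized instrument `M` on a bipartite matrix. -/
def instrApplyRef [DecidableEq O] (E : O → (Matrix Q Q ℂ →ₗ[ℂ] Matrix Q' Q' ℂ))
    (M : Matrix (R × Q) (R × Q) ℂ) : Matrix (R × Q' × O) (R × Q' × O) ℂ :=
  fun p q => if p.2.2 = q.2.2 then
    E p.2.2 (Matrix.of fun a b => M (p.1, a) (q.1, b)) p.2.1 q.2.1 else 0

/-- The coherent information `I_c^{R→B}(ρ^{RB}) = S(ρ^B) - S(ρ^{RB})`. -/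
def cohInfo [Fintype R] [DecidableEq R] [Fintype B] [DecidableEq B]
    (M : Matrix (R × B) (R × B) ℂ) : ℝ :=
  entropy (ptraceL M) - entropy M

/-- The quantum disturbance `δ(ρ,M) = S(ρ) - I_c^{R→Q'𝒳}((id_R ⊗ M)(Ψ))` of an
instrument, w.r.t. a purification `Ψ` of `ρ`. -/
def qDisturbance [Fintype Q] [DecidableEq Q] [Fintype Q'] [DecidableEq Q']
    [Fintype R] [DecidableEq R] [Fintype O] [DecidableEq O]
    (ρ : Matrix Q Q ℂ) (E : O → (Matrix Q Q ℂ →ₗ[ℂ] Matrix Q' Q' ℂ))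
    (Ψ : R × Q → ℂ) : ℝ :=
  entropy ρ - cohInfo (instrApplyRef E (pureState Ψ))

/-- The quantum disturbance (coherent information loss)
`δ(ρ,E) = S(ρ) - I_c^{R→Q'}((id_R ⊗ E)(Ψ))` of a channel. -/
def qDisturbanceChan [Fintype Q] [DecidableEq Q] [Fintype Q'] [DecidableEq Q']
    [Fintype R] [DecidableEq R]
    (ρ : Matrix Q Q ℂ) (E : Matrix Q Q ℂ →ₗ[ℂ] Matrix Q' Q' ℂ)
    (Ψ : R × Q → ℂ) : ℝ :=
  entropy ρ - cohInfo (idTensor E (pureState Ψ))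

/-- The quantum information gain `ι(ρ,M) = S(ρ^R) - ∑ₘ p(m) S(τ^R_m)`. -/
def qInfoGain [Fintype Q] [DecidableEq Q] [Fintype Q'] [DecidableEq Q']
    [Fintype R] [DecidableEq R] [Fintype O]
    (E : O → (Matrix Q Q ℂ →ₗ[ℂ] Matrix Q' Q' ℂ)) (Ψ : R × Q → ℂ) : ℝ :=
  entropy (ptraceRt (pureState Ψ)) -
    ∑ m, ((E m (ptraceL (pureState Ψ))).trace.re) *
      entropy ((((E m (ptraceL (pureState Ψ))).trace.re)⁻¹ : ℝ) •
        ptraceRt (idTensor (E m) (pureState Ψ)))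

/-- The corrected average output fidelity of an instrument on an ensemble:
`F_av(s,M) = sup over families of correcting channels {R_m} of
∑ₓ p(x) F(∑ₘ R_m(E_m(ρₓ)), ρₓ)`. -/
def avgFid [Fintype Q] [DecidableEq Q] [Fintype Q'] [Fintype X] [Fintype O]
    (p : X → ℝ) (ρ : X → Matrix Q Q ℂ)
    (E : O → (Matrix Q Q ℂ →ₗ[ℂ] Matrix Q' Q' ℂ)) : ℝ :=
  ⨆ Rf : {Rf : O → (Matrix Q' Q' ℂ →ₗ[ℂ] Matrix Q Q ℂ) // ∀ m, IsChannel (Rf m)},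
    ∑ x, p x * fidelity (∑ m, Rf.1 m (E m (ρ x))) (ρ x)

/-- The corrected average output fidelity of a channel on an ensemble:
`F_av(s,E) = sup over correcting channels R of ∑ₓ p(x) F(R(E(ρₓ)), ρₓ)`. -/
def avgFidChan [Fintype Q] [DecidableEq Q] [Fintype Q'] [Fintype X]
    (p : X → ℝ) (ρ : X → Matrix Q Q ℂ)
    (E : Matrix Q Q ℂ →ₗ[ℂ] Matrix Q' Q' ℂ) : ℝ :=
  ⨆ Rc : {Rc : Matrix Q' Q' ℂ →ₗ[ℂ] Matrix Q Q ℂ // IsChannel Rc},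
    ∑ x, p x * fidelity (Rc.1 (E (ρ x))) (ρ x)

/-- The corrected entanglement fidelity of an instrument w.r.t. a purification `Ψ`:
`F_e(ρ,M) = sup over families of correcting channels {R_m} of
F(∑ₘ (id_R ⊗ R_m ∘ E_m)(Ψ), Ψ)`. -/
def entFid [Fintype Q] [DecidableEq Q] [Fintype Q'] [Fintype R] [DecidableEq R] [Fintype O]
    (Ψ : R × Q → ℂ) (E : O → (Matrix Q Q ℂ →ₗ[ℂ] Matrix Q' Q' ℂ)) : ℝ :=
  ⨆ Rf : {Rf : O → (Matrix Q' Q' ℂ →ₗ[ℂ] Matrix Q Q ℂ) // ∀ m, IsChannel (Rf m)},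
    fidelity (∑ m, idTensor (Rf.1 m ∘ₗ E m) (pureState Ψ)) (pureState Ψ)

/-- A POVM: positive operators summing to the identity. -/
def IsPOVM [Fintype Q] [DecidableEq Q] [Fintype O] (P : O → Matrix Q Q ℂ) : Prop :=
  (∀ m, (P m).PosSemidef) ∧ ∑ m, P m = 1

/-- The classical mutual information `I(X:O)` of the joint distribution
`p(x,m) = p(x) Tr[ρₓ P_m]` generated by measuring the ensemble with the POVM `P`. -/
def povmMutualInfo [Fintype Q] [Fintype X] [Fintype O]
    (p : X → ℝ) (ρ : X → Matrix Q Q ℂ) (P : O → Matrix Q Q ℂ) : ℝ :=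
  ∑ x, ∑ m, p x * (ρ x * P m).trace.re *
    Real.logb 2 ((ρ x * P m).trace.re / (∑ x', p x' * (ρ x' * P m).trace.re))

/-- The accessible information: supremum of the mutual information over all POVMs. -/
def accInfo [Fintype Q] [DecidableEq Q] [Fintype X]
    (p : X → ℝ) (ρ : X → Matrix Q Q ℂ) : ℝ :=
  ⨆ k : ℕ, ⨆ P : {P : Fin k → Matrix Q Q ℂ // IsPOVM P}, povmMutualInfo p ρ P.1

/-- The minimum overlap `min_{1 ≤ i ≤ N-1} |⟨ψ_{x_i}|ψ_{x_{i+1}}⟩|` along a path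
`x : Fin N → X` of signals. -/
def pathMin [Fintype Q] (ψ : X → Q → ℂ) {N : ℕ} (x : Fin N → X) : ℝ :=
  ⨅ i : Fin (N - 1),
    ‖(star (ψ (x (Fin.castLE (Nat.sub_le N 1) i))) ⬝ᵥ
      ψ (x ⟨i.1 + 1, by have := i.isLt; omega⟩))‖

/-- `η(s)`: the supremum over all complete (surjective) paths of the minimum
consecutive overlap divided by the length of the path. -/
def eta [Fintype Q] (ψ : X → Q → ℂ) : ℝ :=
  ⨆ N : ℕ, ⨆ x : {x : Fin N → X // Function.Surjective x}, pathMin ψ x.1 / N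

/-- `ζ(s) = η(s) · minₓ p(x)`; the ensemble is irreducible iff `ζ(s) > 0`. -/
def zeta [Fintype Q] [Fintype X] (p : X → ℝ) (ψ : X → Q → ℂ) : ℝ :=
  eta ψ * ⨅ x, p x

/-- `Tr_R[(φ ⊗ 1_Q)|Ψ⟩⟨Ψ|]` for an operator `φ` on the reference system. -/
def refOp [Fintype R] (φ : Matrix R R ℂ) (Ψ : R × Q → ℂ) : Matrix Q Q ℂ :=
  fun a b => ∑ i, ∑ k, φ i k * Ψ (k, a) * star (Ψ (i, b))


section AuxSpectral

namespace QIDAux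

variable {n : Type*} [Fintype n] [DecidableEq n]

/-- characteristic polynomial substitute -/
def cp (M : Matrix n n ℂ) : Polynomial ℂ :=
  ((Polynomial.X : Polynomial ℂ) • (1 : Matrix n n (Polynomial ℂ)) - M.map Polynomial.C).det

lemma cp_diagonal (v : n → ℂ) : cp (Matrix.diagonal v) = ∏ i, ((Polynomial.X : Polynomial ℂ) - Polynomial.C (v i)) := by
  have h : ((Polynomial.X : Polynomial ℂ) • (1 : Matrix n n (Polynomial ℂ)) - (Matrix.diagonal v).map Polynomial.C)
      = Matrix.diagonal (fun i => (Polynomial.X : Polynomial ℂ) - Polynomial.C (v i)) := by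
    ext i j
    by_cases hij : i = j <;>
      simp [Matrix.smul_apply, Matrix.one_apply, Matrix.sub_apply, Matrix.map_apply,
        Matrix.diagonal_apply, hij]
  rw [cp, h, Matrix.det_diagonal]

lemma cp_conj (U B : Matrix n n ℂ) (h1 : U * Uᴴ = 1) : cp (U * B * Uᴴ) = cp B := by
  have h2 : Uᴴ * U = 1 := mul_eq_one_comm.mp h1
  set mU := U.map Polynomial.C with hmU
  set mUc := Uᴴ.map Polynomial.C with hmUc
  have hm1 : mU * mUc = 1 := by
    rw [hmU, hmUc, ← Matrix.map_mul, h1, Matrix.map_one _ (map_zero _) (map_one _)]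
  have hm2 : mUc * mU = 1 := by
    rw [hmU, hmUc, ← Matrix.map_mul, h2, Matrix.map_one _ (map_zero _) (map_one _)]
  have key : (Polynomial.X : Polynomial ℂ) • (1 : Matrix n n (Polynomial ℂ)) - (U * B * Uᴴ).map Polynomial.C
      = mU * ((Polynomial.X : Polynomial ℂ) • (1 : Matrix n n (Polynomial ℂ)) - B.map Polynomial.C) * mUc := by
    rw [Matrix.mul_sub, Matrix.sub_mul, Matrix.mul_smul, mul_one, Matrix.smul_mul, hm1,
      Matrix.map_mul, Matrix.map_mul]
  rw [cp, key, Matrix.det_mul, Matrix.det_mul, cp]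
  rw [mul_comm (mU.det), mul_assoc, ← Matrix.det_mul, hm1, Matrix.det_one, mul_one]

variable {n : Type*} [Fintype n] [DecidableEq n]

lemma sum_f_eig {ρ : Matrix n n ℂ} (hρ : ρ.IsHermitian) {U : Matrix n n ℂ}
    (h1 : U * Uᴴ = 1) (d : n → ℝ)
    (hd : ρ = U * Matrix.diagonal (fun i => (d i : ℂ)) * Uᴴ) (f : ℝ → ℝ) :
    ∑ i, f (hρ.eigenvalues i) = ∑ i, f (d i) := by
  set V : Matrix n n ℂ := (hρ.eigenvectorUnitary : Matrix n n ℂ) with hV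
  have hV1 : V * Vᴴ = 1 := by
    rw [← Matrix.star_eq_conjTranspose]
    exact Matrix.mem_unitaryGroup_iff.mp hρ.eigenvectorUnitary.2
  have hspec : ρ = V * Matrix.diagonal (fun i => ((hρ.eigenvalues i : ℝ) : ℂ)) * Vᴴ := by
    have := hρ.spectral_theorem
    rw [Unitary.conjStarAlgAut_apply] at this
    rw [← Matrix.star_eq_conjTranspose]
    convert this using 3 <;> rfl
  have hcp : (∏ i, (Polynomial.X - Polynomial.C ((hρ.eigenvalues i : ℝ) : ℂ)))
      = ∏ i, (Polynomial.X - Polynomial.C ((d i : ℝ) : ℂ)) := by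
    calc (∏ i, (Polynomial.X - Polynomial.C ((hρ.eigenvalues i : ℝ) : ℂ)))
        = cp (Matrix.diagonal fun i => ((hρ.eigenvalues i : ℝ) : ℂ)) := (cp_diagonal _).symm
      _ = cp (V * Matrix.diagonal (fun i => ((hρ.eigenvalues i : ℝ) : ℂ)) * Vᴴ) :=
          (cp_conj V _ hV1).symm
      _ = cp ρ := by rw [← hspec]
      _ = cp (U * Matrix.diagonal (fun i => (d i : ℂ)) * Uᴴ) := by rw [← hd]
      _ = cp (Matrix.diagonal fun i => ((d i : ℝ) : ℂ)) := cp_conj U _ h1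
      _ = ∏ i, (Polynomial.X - Polynomial.C ((d i : ℝ) : ℂ)) := cp_diagonal _
  have hroots : (Finset.univ.val.map fun i => ((hρ.eigenvalues i : ℝ) : ℂ))
      = Finset.univ.val.map fun i => ((d i : ℝ) : ℂ) := by
    have e1 := congrArg Polynomial.roots hcp
    rwa [Finset.prod_eq_multiset_prod, Finset.prod_eq_multiset_prod,
      show (Finset.univ.val.map fun i => Polynomial.X - Polynomial.C ((hρ.eigenvalues i : ℝ) : ℂ))
        = ((Finset.univ.val.map fun i => ((hρ.eigenvalues i : ℝ) : ℂ)).map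
            fun a => Polynomial.X - Polynomial.C a) by rw [Multiset.map_map]; rfl,
      show (Finset.univ.val.map fun i => Polynomial.X - Polynomial.C ((d i : ℝ) : ℂ))
        = ((Finset.univ.val.map fun i => ((d i : ℝ) : ℂ)).map
            fun a => Polynomial.X - Polynomial.C a) by rw [Multiset.map_map]; rfl,
      Polynomial.roots_multiset_prod_X_sub_C, Polynomial.roots_multiset_prod_X_sub_C] at e1
  have hre : (Finset.univ.val.map fun i => hρ.eigenvalues i)
      = Finset.univ.val.map fun i => d i := by
    have := congrArg (Multiset.map Complex.re) hroots
    rwa [Multiset.map_map, Multiset.map_map] at this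
    
  calc ∑ i, f (hρ.eigenvalues i)
      = ((Finset.univ.val.map fun i => hρ.eigenvalues i).map f).sum := by
        rw [Multiset.map_map]; rfl
    _ = ((Finset.univ.val.map fun i => d i).map f).sum := by rw [hre]
    _ = ∑ i, f (d i) := by rw [Multiset.map_map]; rfl


lemma herm_of_decomp (U : Matrix n n ℂ) (d : n → ℝ) :
    (U * Matrix.diagonal (fun i => (d i : ℂ)) * Uᴴ).IsHermitian := by
  have hD : (Matrix.diagonal (fun i => (d i : ℂ))).IsHermitian := by
    show _ = _
    ext i j
    by_cases hij : i = j
    · simp [Matrix.diagonal_apply, hij, Complex.conj_ofReal]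
    · simp [Matrix.diagonal_apply, hij, Ne.symm hij, Complex.conj_ofReal]
  exact Matrix.isHermitian_mul_mul_conjTranspose U hD

lemma trace_of_decomp (U : Matrix n n ℂ) (d : n → ℝ) (h1 : U * Uᴴ = 1) :
    (U * Matrix.diagonal (fun i => (d i : ℂ)) * Uᴴ).trace = ∑ i, (d i : ℂ) := by
  rw [Matrix.trace_mul_cycle, mul_eq_one_comm.mp h1, Matrix.one_mul, Matrix.trace_diagonal]

lemma spectral' {τ : Matrix n n ℂ} (h : τ.IsHermitian) :
    τ = (h.eigenvectorUnitary : Matrix n n ℂ) *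
        Matrix.diagonal (fun i => ((h.eigenvalues i : ℝ) : ℂ)) *
        (h.eigenvectorUnitary : Matrix n n ℂ)ᴴ := by
  have := h.spectral_theorem
  rw [Unitary.conjStarAlgAut_apply] at this
  rw [← Matrix.star_eq_conjTranspose]
  convert this using 3 <;> rfl

lemma unitary_mul_conjTranspose {τ : Matrix n n ℂ} (h : τ.IsHermitian) :
    (h.eigenvectorUnitary : Matrix n n ℂ) * (h.eigenvectorUnitary : Matrix n n ℂ)ᴴ = 1 := by
  rw [← Matrix.star_eq_conjTranspose]
  exact Matrix.mem_unitaryGroup_iff.mp h.eigenvectorUnitary.2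

lemma trace_re_eq_sum_eig {τ : Matrix n n ℂ} (h : τ.IsHermitian) :
    τ.trace.re = ∑ i, h.eigenvalues i := by
  conv_lhs => rw [spectral' h]
  rw [trace_of_decomp _ _ (unitary_mul_conjTranspose h), Complex.re_sum]
  simp

lemma entropy_smul_eig {τ : Matrix n n ℂ} (h : τ.IsHermitian) (c : ℝ) :
    entropy (c • τ) = (∑ i, Real.negMulLog (c * h.eigenvalues i)) / Real.log 2 := by
  set V : Matrix n n ℂ := (h.eigenvectorUnitary : Matrix n n ℂ) with hV
  have hD : c • Matrix.diagonal (fun i => ((h.eigenvalues i : ℝ) : ℂ))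
      = Matrix.diagonal (fun i => ((c * h.eigenvalues i : ℝ) : ℂ)) := by
    ext i j
    by_cases hij : i = j <;>
      simp [Matrix.diagonal_apply, hij, Complex.real_smul, Complex.ofReal_mul]
  have hmove : V * (c • Matrix.diagonal (fun i => ((h.eigenvalues i : ℝ) : ℂ))) * Vᴴ
      = c • (V * Matrix.diagonal (fun i => ((h.eigenvalues i : ℝ) : ℂ)) * Vᴴ) := by
    rw [Matrix.mul_smul, Matrix.smul_mul]
  have hdecomp : c • τ = V * Matrix.diagonal (fun i => ((c * h.eigenvalues i : ℝ) : ℂ)) * Vᴴ := by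
    conv_lhs => rw [spectral' h]
    rw [← hD, hmove]
  have hherm : (c • τ).IsHermitian := hdecomp ▸ herm_of_decomp V (fun i => c * h.eigenvalues i)
  rw [entropy, dif_pos hherm]
  congr 1
  exact sum_f_eig hherm (unitary_mul_conjTranspose h) _ hdecomp Real.negMulLog

lemma entropy_eq_sum_eig {τ : Matrix n n ℂ} (h : τ.IsHermitian) :
    entropy τ = (∑ i, Real.negMulLog (h.eigenvalues i)) / Real.log 2 := by
  have := entropy_smul_eig h 1
  simpa using this

lemma entropy_blockDiagonal {m o : Type*} [Fintype m] [DecidableEq m] [Fintype o] [DecidableEq o]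
    {σ : o → Matrix m m ℂ} (h : ∀ k, (σ k).IsHermitian) :
    entropy (Matrix.blockDiagonal σ) =
      (∑ k, ∑ a, Real.negMulLog ((h k).eigenvalues a)) / Real.log 2 := by
  set V : Matrix (m × o) (m × o) ℂ :=
    Matrix.blockDiagonal (fun k => ((h k).eigenvectorUnitary : Matrix m m ℂ)) with hVdef
  have hV1 : V * Vᴴ = 1 := by
    rw [hVdef, Matrix.blockDiagonal_conjTranspose, ← Matrix.blockDiagonal_mul]
    rw [show (fun k => ((h k).eigenvectorUnitary : Matrix m m ℂ) *
        ((h k).eigenvectorUnitary : Matrix m m ℂ)ᴴ) = fun _ => (1 : Matrix m m ℂ) by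
      funext k; exact unitary_mul_conjTranspose (h k)]
    exact Matrix.blockDiagonal_one
  have hdecomp : Matrix.blockDiagonal σ
      = V * Matrix.diagonal (fun p : m × o => (((h p.2).eigenvalues p.1 : ℝ) : ℂ)) * Vᴴ := by
    rw [hVdef, Matrix.blockDiagonal_conjTranspose,
      show Matrix.diagonal (fun p : m × o => (((h p.2).eigenvalues p.1 : ℝ) : ℂ))
        = Matrix.blockDiagonal
            (fun k => Matrix.diagonal (fun a => (((h k).eigenvalues a : ℝ) : ℂ))) from by
        ext ⟨a, k⟩ ⟨b, k'⟩
        simp only [Matrix.blockDiagonal_apply, Matrix.diagonal_apply, Prod.mk.injEq]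
        by_cases h1 : k = k' <;> by_cases h2 : a = b <;> simp [h1, h2],
      ← Matrix.blockDiagonal_mul, ← Matrix.blockDiagonal_mul]
    exact congrArg Matrix.blockDiagonal (funext fun k => spectral' (h k))
  have hherm : (Matrix.blockDiagonal σ).IsHermitian :=
    hdecomp ▸ herm_of_decomp V (fun p => (h p.2).eigenvalues p.1)
  rw [entropy, dif_pos hherm]
  congr 1
  rw [sum_f_eig hherm hV1 _ hdecomp Real.negMulLog, Fintype.sum_prod_type]
  exact Finset.sum_comm

lemma psd_smul {c : ℝ} (hc : 0 ≤ c) {M : Matrix n n ℂ} (hM : M.PosSemidef) :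
    ((c : ℂ) • M).PosSemidef := by
  constructor
  · show _ = _
    rw [Matrix.conjTranspose_smul, hM.1.eq, Complex.star_def, Complex.conj_ofReal]
  · intro x
    exact (hM.smul (a := (c : ℂ)) (by exact_mod_cast hc)).2 x

lemma psd_sum {ι : Type*} (s : Finset ι) (f : ι → Matrix n n ℂ)
    (h : ∀ i ∈ s, (f i).PosSemidef) : (∑ i ∈ s, f i).PosSemidef :=
  Finset.sum_induction f Matrix.PosSemidef (fun _ _ ha hb => ha.add hb) .zero h

end QIDAux
end AuxSpectral

section AuxCP
lemma cp_posSemidef {Q Q' : Type*} [Fintype Q] [Fintype Q']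
    {Φ : Matrix Q Q ℂ →ₗ[ℂ] Matrix Q' Q' ℂ} (hΦ : IsCompletelyPositive Φ)
    {ρ : Matrix Q Q ℂ} (hρ : ρ.PosSemidef) : (Φ ρ).PosSemidef := by
  have hM : (ρ.submatrix (Prod.snd : Fin 1 × Q → Q) Prod.snd).PosSemidef := hρ.submatrix _
  have h2 := hΦ 1 _ hM
  have heq : Φ ρ = (idTensor Φ (ρ.submatrix Prod.snd Prod.snd)).submatrix
      (fun a : Q' => ((0 : Fin 1), a)) (fun a => ((0 : Fin 1), a)) := by
    ext a b
    rfl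
  rw [heq]
  exact h2.submatrix _
end AuxCP

section AuxReal

lemma mut_term {a b : ℝ} (ha : 0 ≤ a) (hab : a ≠ 0 → 0 < b) :
    a * Real.logb 2 (a / b) = (-Real.negMulLog a - a * Real.log b) / Real.log 2 := by
  rcases eq_or_ne a 0 with h | h
  · simp [h, Real.negMulLog_zero]
  · have hb := hab h
    have ha' : 0 < a := ha.lt_of_ne' h
    rw [Real.logb, Real.log_div h hb.ne', Real.negMulLog]
    ring

lemma sum_negMulLog_decomp {n : Type*} [Fintype n] (e : n → ℝ) (he : ∀ i, 0 ≤ e i)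
    (q : ℝ) (hq : q = ∑ i, e i) :
    ∑ i, Real.negMulLog (e i)
      = q * (∑ i, Real.negMulLog (q⁻¹ * e i)) + Real.negMulLog q := by
  have hq0 : 0 ≤ q := hq ▸ Finset.sum_nonneg fun i _ => he i
  rcases eq_or_lt_of_le hq0 with h0 | hpos
  · have hz : ∀ i ∈ Finset.univ, e i = 0 :=
      (Finset.sum_eq_zero_iff_of_nonneg fun i _ => he i).mp (hq ▸ h0.symm)
    simp only [← h0, Real.negMulLog_zero, add_zero, zero_mul]
    exact Finset.sum_eq_zero fun i hi => by rw [hz i hi, Real.negMulLog_zero]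
  · have key : ∀ i, q * Real.negMulLog (q⁻¹ * e i)
        = Real.negMulLog (e i) + e i * Real.log q := by
      intro i
      rcases eq_or_lt_of_le (he i) with h | h
      · simp [← h, Real.negMulLog_zero]
      · rw [Real.negMulLog, Real.negMulLog, Real.log_mul (by positivity) h.ne',
          Real.log_inv]
        field_simp
        ring
    rw [Finset.mul_sum]
    simp only [key]
    rw [Finset.sum_add_distrib, ← Finset.sum_mul, ← hq, Real.negMulLog]
    ring

lemma per_m {X : Type*} [Fintype X] (p r : X → ℝ) (q SA : ℝ) (SB : X → ℝ)
    (hr : ∀ x, 0 ≤ r x) (hq : q = ∑ x, p x * r x)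
    (hqpos : ∀ x, r x ≠ 0 → 0 < q) :
    (q * SA + Real.negMulLog q) / Real.log 2
      - ∑ x, p x * ((r x * SB x + Real.negMulLog (r x)) / Real.log 2)
    = q * (SA / Real.log 2 - ∑ x, (p x * r x / q) * (SB x / Real.log 2))
      + ∑ x, p x * r x * Real.logb 2 (r x / q) := by
  have T1 : ∑ x, p x * ((r x * SB x + Real.negMulLog (r x)) / Real.log 2)
      = (∑ x, p x * r x * SB x) / Real.log 2
        + (∑ x, p x * Real.negMulLog (r x)) / Real.log 2 := by
    rw [Finset.sum_div, Finset.sum_div, ← Finset.sum_add_distrib]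
    exact Finset.sum_congr rfl fun x _ => by ring
  have T2 : q * (∑ x, (p x * r x / q) * (SB x / Real.log 2))
      = (∑ x, p x * r x * SB x) / Real.log 2 := by
    rcases eq_or_ne q 0 with h0 | h0
    · have hz : ∀ x, r x = 0 := fun x => by
        by_contra hx
        exact absurd h0 (hqpos x hx).ne'
      simp [h0, hz]
    · rw [Finset.mul_sum, Finset.sum_div]
      exact Finset.sum_congr rfl fun x _ => by field_simp
  have T3 : ∑ x, p x * r x * Real.logb 2 (r x / q)
      = -((∑ x, p x * Real.negMulLog (r x)) / Real.log 2)
        - q * Real.log q / Real.log 2 := by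
    have step : ∀ x, p x * r x * Real.logb 2 (r x / q)
        = -(p x * Real.negMulLog (r x)) / Real.log 2
          - p x * r x * Real.log q / Real.log 2 := fun x => by
      rw [mul_assoc, mut_term (hr x) (hqpos x)]
      ring
    calc ∑ x, p x * r x * Real.logb 2 (r x / q)
        = ∑ x, (-(p x * Real.negMulLog (r x)) / Real.log 2
            - p x * r x * Real.log q / Real.log 2) :=
          Finset.sum_congr rfl fun x _ => step x
      _ = (∑ x, -(p x * Real.negMulLog (r x)) / Real.log 2)
          - ∑ x, p x * r x * Real.log q / Real.log 2 := Finset.sum_sub_distrib _ _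
      _ = -((∑ x, p x * Real.negMulLog (r x)) / Real.log 2)
          - q * Real.log q / Real.log 2 := by
          rw [← Finset.sum_div, ← Finset.sum_div, ← Finset.sum_mul, ← hq,
            Finset.sum_neg_distrib, neg_div]
  rw [T1, mul_sub, T2, T3, Real.negMulLog]
  ring

end AuxReal


/-- The entropy defect loss of the channelized instrument equals
`Δχ(s,M) = ∑ₘ p(m)[χ(s) - χ(s̄ₘ)] - I(X:𝒳)`. -/
theorem defectLoss_decomposition
    {Q Q' O X : Type*} [Fintype Q] [DecidableEq Q] [Fintype Q'] [DecidableEq Q']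
    [Fintype O] [DecidableEq O] [Fintype X]
    (E : O → (Matrix Q Q ℂ →ₗ[ℂ] Matrix Q' Q' ℂ)) (hE : IsInstrument E)
    (p : X → ℝ) (ρ : X → Matrix Q Q ℂ)
    (hp : ∀ x, 0 < p x) (hp1 : (∑ x, p x) = 1) (hρ : ∀ x, IsDensity (ρ x))
    (pmx : X → O → ℝ) (hpmx : ∀ x m, pmx x m = (E m (ρ x)).trace.re)
    (pm : O → ℝ) (hpm : ∀ m, pm m = ∑ x, p x * pmx x m)
    (Iinfo : ℝ)
    (hI : Iinfo = ∑ x, ∑ m, p x * pmx x m * Real.logb 2 (pmx x m / pm m))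
    (chiBar : O → ℝ)
    (hchi : ∀ m, chiBar m =
      entropy (((pm m)⁻¹ : ℝ) • E m (∑ x, (p x : ℂ) • ρ x)) -
        ∑ x, (p x * pmx x m / pm m) * entropy (((pmx x m)⁻¹ : ℝ) • E m (ρ x))) :
    entropyDefect p ρ - entropyDefect p (fun x => instrApply E (ρ x)) =
      (∑ m, pm m * (entropyDefect p ρ - chiBar m)) - Iinfo := by
  classical
  set L := Real.log 2 with hLdef
  set ρbar : Matrix Q Q ℂ := ∑ x, (p x : ℂ) • ρ x with hρbar
  have hτpsd : ∀ x m, (E m (ρ x)).PosSemidef := fun x m => cp_posSemidef (hE.1 m) (hρ x).1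
  have hρbarpsd : ρbar.PosSemidef :=
    QIDAux.psd_sum _ _ fun x _ => QIDAux.psd_smul (hp x).le (hρ x).1
  have hσpsd : ∀ m, (E m ρbar).PosSemidef := fun m => cp_posSemidef (hE.1 m) hρbarpsd
  set e : X → O → Q' → ℝ := fun x m => (hτpsd x m).1.eigenvalues with he
  set g : O → Q' → ℝ := fun m => (hσpsd m).1.eigenvalues with hg
  -- basic probability facts
  have hpmx_eq : ∀ x m, pmx x m = ∑ a, e x m a := fun x m => by
    rw [hpmx, QIDAux.trace_re_eq_sum_eig (hτpsd x m).1]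
  have he0 : ∀ x m a, 0 ≤ e x m a := fun x m a => (hτpsd x m).eigenvalues_nonneg a
  have hg0 : ∀ m a, 0 ≤ g m a := fun m a => (hσpsd m).eigenvalues_nonneg a
  have hpmx0 : ∀ x m, 0 ≤ pmx x m := fun x m =>
    (hpmx_eq x m) ▸ Finset.sum_nonneg fun a _ => he0 x m a
  have hσsum : ∀ m, E m ρbar = ∑ x, (p x : ℂ) • E m (ρ x) := fun m => by
    rw [hρbar, map_sum]
    exact Finset.sum_congr rfl fun x _ => by rw [_root_.map_smul]
  have hpm_re : ∀ m, pm m = (E m ρbar).trace.re := fun m => by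
    rw [hpm, hσsum m, Matrix.trace_sum, Complex.re_sum]
    exact Finset.sum_congr rfl fun x _ => by
      rw [Matrix.trace_smul, smul_eq_mul, Complex.re_ofReal_mul, hpmx]
  have hpm_eq : ∀ m, pm m = ∑ a, g m a := fun m => by
    rw [hpm_re m]
    exact QIDAux.trace_re_eq_sum_eig _
  have hpm_pos : ∀ m x, pmx x m ≠ 0 → 0 < pm m := fun m x hx => by
    have h1 : 0 < p x * pmx x m := mul_pos (hp x) ((hpmx0 x m).lt_of_ne' hx)
    have h2 : p x * pmx x m ≤ pm m := by
      rw [hpm]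
      exact Finset.single_le_sum (fun y _ => mul_nonneg (hp y).le (hpmx0 y m))
        (Finset.mem_univ x)
    exact lt_of_lt_of_le h1 h2
  have hrow : ∀ x, ∑ m, pmx x m = 1 := fun x => by
    calc ∑ m, pmx x m = (∑ m, (E m (ρ x)).trace).re := by
          rw [Complex.re_sum]
          exact Finset.sum_congr rfl fun m _ => hpmx x m
      _ = ((∑ m, E m (ρ x)).trace).re := by rw [Matrix.trace_sum]
      _ = 1 := by rw [hE.2, (hρ x).2, Complex.one_re]
  have hsum_pm : ∑ m, pm m = 1 := by
    calc ∑ m, pm m = ∑ m, ∑ x, p x * pmx x m := Finset.sum_congr rfl fun m _ => hpm m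
      _ = ∑ x, ∑ m, p x * pmx x m := Finset.sum_comm
      _ = ∑ x, p x := Finset.sum_congr rfl fun x _ => by
          rw [← Finset.mul_sum, hrow, mul_one]
      _ = 1 := hp1
  -- entropies of the channelized outputs
  have hinstr_x : ∀ x, instrApply E (ρ x) = Matrix.blockDiagonal (fun m => E m (ρ x)) :=
    fun x => by
      ext ⟨a, m⟩ ⟨b, m'⟩
      by_cases h : m = m' <;> simp [instrApply, Matrix.blockDiagonal_apply', h]
  have hSx : ∀ x, entropy (instrApply E (ρ x)) = (∑ m, ∑ a, Real.negMulLog (e x m a)) / L :=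
    fun x => by
      rw [hinstr_x x]
      exact QIDAux.entropy_blockDiagonal (fun m => (hτpsd x m).1)
  have hinstr_bar : (∑ x, (p x : ℂ) • instrApply E (ρ x))
      = Matrix.blockDiagonal (fun m => E m ρbar) := by
    ext ⟨a, m⟩ ⟨b, m'⟩
    rw [Matrix.sum_apply]
    by_cases h : m = m'
    · subst h
      simp [instrApply, Matrix.blockDiagonal_apply', hσsum m, Matrix.sum_apply]
    · simp [instrApply, Matrix.blockDiagonal_apply', h]
  have hSbar : entropy (∑ x, (p x : ℂ) • instrApply E (ρ x))
      = (∑ m, ∑ a, Real.negMulLog (g m a)) / L := by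
    rw [hinstr_bar]
    exact QIDAux.entropy_blockDiagonal (fun m => (hσpsd m).1)
  -- scaled conditional entropies
  set SA : O → ℝ := fun m => ∑ a, Real.negMulLog ((pm m)⁻¹ * g m a) with hSA
  set SB : X → O → ℝ := fun x m => ∑ a, Real.negMulLog ((pmx x m)⁻¹ * e x m a) with hSB
  have hchiA : ∀ m, entropy (((pm m)⁻¹ : ℝ) • E m ρbar) = SA m / L :=
    fun m => QIDAux.entropy_smul_eig (hσpsd m).1 _
  have hchiB : ∀ x m, entropy (((pmx x m)⁻¹ : ℝ) • E m (ρ x)) = SB x m / L :=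
    fun x m => QIDAux.entropy_smul_eig (hτpsd x m).1 _
  have hdecomp_g : ∀ m, ∑ a, Real.negMulLog (g m a)
      = pm m * SA m + Real.negMulLog (pm m) :=
    fun m => sum_negMulLog_decomp _ (hg0 m) _ (hpm_eq m)
  have hdecomp_e : ∀ x m, ∑ a, Real.negMulLog (e x m a)
      = pmx x m * SB x m + Real.negMulLog (pmx x m) :=
    fun x m => sum_negMulLog_decomp _ (he0 x m) _ (hpmx_eq x m)
  have hchi' : ∀ m, chiBar m
      = SA m / L - ∑ x, (p x * pmx x m / pm m) * (SB x m / L) := fun m => by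
    rw [hchi m, hchiA m]
    congr 1
    exact Finset.sum_congr rfl fun x _ => by rw [hchiB x m]
  set D := entropyDefect p ρ with hD
  -- the main per-outcome identity, summed
  have MAIN : (∑ m, ∑ a, Real.negMulLog (g m a)) / L
      - ∑ x, p x * ((∑ m, ∑ a, Real.negMulLog (e x m a)) / L)
      = ∑ m, pm m * chiBar m + Iinfo := by
    have lhs_eq : (∑ m, ∑ a, Real.negMulLog (g m a)) / L
        - ∑ x, p x * ((∑ m, ∑ a, Real.negMulLog (e x m a)) / L)
        = ∑ m, ((∑ a, Real.negMulLog (g m a)) / L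
            - ∑ x, p x * ((∑ a, Real.negMulLog (e x m a)) / L)) := by
      rw [Finset.sum_sub_distrib, ← Finset.sum_div]
      congr 1
      calc ∑ x, p x * ((∑ m, ∑ a, Real.negMulLog (e x m a)) / L)
          = ∑ x, ∑ m, p x * ((∑ a, Real.negMulLog (e x m a)) / L) := by
            refine Finset.sum_congr rfl fun x _ => ?_
            rw [Finset.sum_div, Finset.mul_sum]
        _ = ∑ m, ∑ x, p x * ((∑ a, Real.negMulLog (e x m a)) / L) := Finset.sum_comm
    have rhs_eq : ∑ m, pm m * chiBar m + Iinfo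
        = ∑ m, (pm m * chiBar m + ∑ x, p x * pmx x m * Real.logb 2 (pmx x m / pm m)) := by
      rw [hI, Finset.sum_add_distrib]
      congr 1
      exact Finset.sum_comm
    rw [lhs_eq, rhs_eq]
    refine Finset.sum_congr rfl fun m _ => ?_
    rw [hdecomp_g m, hchi' m,
      Finset.sum_congr rfl fun x _ => by rw [hdecomp_e x m], hLdef]
    exact per_m p (fun x => pmx x m) (pm m) (SA m) (fun x => SB x m)
      (fun x => hpmx0 x m) (hpm m) (fun x hx => hpm_pos m x hx)
  -- assemble
  have hsplit : ∑ m, pm m * (D - chiBar m) = D - ∑ m, pm m * chiBar m := by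
    calc ∑ m, pm m * (D - chiBar m) = ∑ m, (pm m * D - pm m * chiBar m) :=
          Finset.sum_congr rfl fun m _ => mul_sub _ _ _
      _ = (∑ m, pm m) * D - ∑ m, pm m * chiBar m := by
          rw [Finset.sum_sub_distrib, Finset.sum_mul]
      _ = D - ∑ m, pm m * chiBar m := by rw [hsum_pm, one_mul]
  have hdefect2 : entropyDefect p (fun x => instrApply E (ρ x))
      = (∑ m, ∑ a, Real.negMulLog (g m a)) / L
        - ∑ x, p x * ((∑ m, ∑ a, Real.negMulLog (e x m a)) / L) := by
    rw [entropyDefect, hSbar]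
    congr 1
    exact Finset.sum_congr rfl fun x _ => by rw [hSx x]
  rw [hdefect2, hsplit]
  linarith [MAIN]
end QID
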